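/- Let Q : {1,2,…} → ℕ be a sequence with Q_1 = 1, and for each n ≥ 2 let μ^n be a finite-support coefficient function with ord(μ^n) = n−1 such that Q_n = Q_1 + Σ_k μ^n_k Q_k. Let 𝓔 be the ascendingly-ordered collection determined by {μ^n : n ≥ 2}. Then the map ε ↦ Σ_k ε_k Q_k is a bijection from 𝓔 \ {0} onto the set of positive integers; in particular, Q has the unique 𝓔-representation property and X_Q = ℕ, i.e., Q is a fundamental sequence for the positive integers under the 𝓔-Zeckendorf condition. -/

import Mathlib

/-- The `i`-th basis coefficient function `β^i`. -/
def beta (i : ℕ) : ℕ → ℕ := fun k => if k = i then 1 else 0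

/-- A coefficient function has finite support. -/
def FinSupp (ε : ℕ → ℕ) : Prop := (Function.support ε).Finite

/-- The ascending lexicographical order `μ <_a ν` on finite-support coefficient
functions: there is a (necessarily largest) index `k` with `μ k < ν k` and
`μ j = ν j` for all `j > k`. -/
def AscLt (μ ν : ℕ → ℕ) : Prop := ∃ k, μ k < ν k ∧ ∀ j, k < j → μ j = ν j

/-- An ascendingly-ordered collection of coefficient functions: a set of
finite-support coefficient functions on the indices `{1,2,...}` (so vanishing
at the dummy index `0`) containing the zero function and every `β^i`. -/
def IsCollection (E : Set (ℕ → ℕ)) : Prop :=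
  (∀ ε ∈ E, ε 0 = 0 ∧ FinSupp ε) ∧ (0 : ℕ → ℕ) ∈ E ∧ ∀ i, 1 ≤ i → beta i ∈ E

/-- `ν` is the immediate successor of `μ` in `E`. -/
def IsImmSucc (E : Set (ℕ → ℕ)) (μ ν : ℕ → ℕ) : Prop :=
  ν ∈ E ∧ AscLt μ ν ∧ ∀ σ ∈ E, AscLt μ σ → σ = ν ∨ AscLt ν σ

/-- `ν` is the immediate predecessor of `μ` in `E`. -/
def IsImmPred (E : Set (ℕ → ℕ)) (μ ν : ℕ → ℕ) : Prop :=
  ν ∈ E ∧ AscLt ν μ ∧ ∀ σ ∈ E, AscLt σ μ → σ = ν ∨ AscLt σ ν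

/-- A Zeckendorf collection for positive integers. -/
def IsZeckendorf (E : Set (ℕ → ℕ)) : Prop :=
  IsCollection E ∧
  (∀ μ ∈ E, {σ | σ ∈ E ∧ AscLt σ μ}.Finite) ∧
  ∀ μ ∈ E, ∃ ν, IsImmSucc E μ ν ∧
    ((ν = fun k => beta 1 k + μ k) ∨
      ∃ n, 2 ≤ n ∧ ∃ δ, IsImmPred E (beta n) δ ∧
        (∀ j, 1 ≤ j → j < n → μ j = δ j) ∧
        (ν = fun k => beta n k + if n ≤ k then μ k else 0))

/-- `ζ` is a proper `d`-block at index `n` with support `[i, n]` (relative to a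
family `d` playing the role of the immediate predecessors `β̂^{n+1}`):
either `ζ` is the zero function (a proper block at any index `n ≥ 1`, with
support `[n,n]`), or `1 ≤ i ≤ n`, `ζ i < d (n+1) i`, `ζ` agrees with `d (n+1)`
on the indices in `(i, n]`, and `ζ` vanishes outside `[i, n]`. -/
def IsProperBlockAt (d : ℕ → ℕ → ℕ) (ζ : ℕ → ℕ) (i n : ℕ) : Prop :=
  ((∀ k, ζ k = 0) ∧ i = n ∧ 1 ≤ n) ∨
    (1 ≤ i ∧ i ≤ n ∧ ζ i < d (n + 1) i ∧
      (∀ j, i < j → j ≤ n → ζ j = d (n + 1) j) ∧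
      ∀ s, s < i ∨ n < s → ζ s = 0)

/-- `ζ` is the maximal `d`-block at index `n` (with support `[1, n]`),
namely `ζ = d (n+1)`. -/
def IsMaxBlockAt (d : ℕ → ℕ → ℕ) (ζ : ℕ → ℕ) (n : ℕ) : Prop :=
  1 ≤ n ∧ ζ = d (n + 1)

/-- `μ = Σ_{m=1}^M ζ m` is a `d`-block decomposition: `ζ 1` is a `d`-block
(proper or maximal) with support `[i 1, n 1]` where `i 1 = 1`, each `ζ m` with
`2 ≤ m ≤ M` is a proper `d`-block with support `[i m, n m]`, and the supports
are consecutive: `i (m+1) = n m + 1`. -/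
def IsBlockDecomp (d : ℕ → ℕ → ℕ) (μ : ℕ → ℕ) (M : ℕ)
    (ζ : ℕ → ℕ → ℕ) (i n : ℕ → ℕ) : Prop :=
  1 ≤ M ∧ i 1 = 1 ∧
  (IsProperBlockAt d (ζ 1) (i 1) (n 1) ∨ IsMaxBlockAt d (ζ 1) (n 1)) ∧
  (∀ m, 2 ≤ m → m ≤ M → IsProperBlockAt d (ζ m) (i m) (n m)) ∧
  (∀ m, 1 ≤ m → m < M → i (m + 1) = n m + 1) ∧
  ∀ k, μ k = ∑ m ∈ Finset.Icc 1 M, ζ m k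

/-- The ascendingly-ordered collection determined by the family `d`, i.e. the
set of all sums of `d`-block decompositions. -/
def DeterminedCollection (d : ℕ → ℕ → ℕ) : Set (ℕ → ℕ) :=
  {μ | ∃ M ζ i n, IsBlockDecomp d μ M ζ i n}

open Finset in
private lemma sum_Icc_split (f : ℕ → ℕ) (M : ℕ) (hM : 1 ≤ M) :
    ∑ m ∈ Finset.Icc 1 M, f m = (∑ m ∈ Finset.Icc 1 (M - 1), f m) + f M := by
  conv_lhs => rw [show M = M - 1 + 1 from by omega]
  rw [Finset.sum_Icc_succ_top (by omega), show M - 1 + 1 = M from by omega]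

private lemma muTop {μ : ℕ → ℕ → ℕ}
    (hord : ∀ n, 2 ≤ n → μ n (n - 1) ≠ 0 ∧ ∀ k, n - 1 < k → μ n k = 0)
    {t : ℕ} (ht : 1 ≤ t) : μ (t + 1) t ≠ 0 := by
  have h := (hord (t + 1) (by omega)).1
  simpa using h

private lemma muAbove {μ : ℕ → ℕ → ℕ}
    (hord : ∀ n, 2 ≤ n → μ n (n - 1) ≠ 0 ∧ ∀ k, n - 1 < k → μ n k = 0)
    {t k : ℕ} (ht : 1 ≤ t) (hk : t < k) : μ (t + 1) k = 0 :=
  (hord (t + 1) (by omega)).2 k (by omega)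

private lemma blockAt0 {d : ℕ → ℕ → ℕ} {ζ : ℕ → ℕ} {i n : ℕ}
    (h : IsProperBlockAt d ζ i n) : ζ 0 = 0 := by
  rcases h with ⟨hz, _, _⟩ | ⟨h1, _, _, _, hout⟩
  · exact hz 0
  · exact hout 0 (Or.inl h1)

private lemma blockBelow {d : ℕ → ℕ → ℕ} {ζ : ℕ → ℕ} {i n : ℕ}
    (h : IsProperBlockAt d ζ i n) : ∀ s, s < i → ζ s = 0 := by
  rcases h with ⟨hz, _, _⟩ | ⟨_, _, _, _, hout⟩
  · exact fun s _ => hz s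
  · exact fun s hs => hout s (Or.inl hs)

private lemma blockAbove {d : ℕ → ℕ → ℕ} {ζ : ℕ → ℕ} {i n : ℕ}
    (h : IsProperBlockAt d ζ i n) : ∀ s, n < s → ζ s = 0 := by
  rcases h with ⟨hz, _, _⟩ | ⟨_, _, _, _, hout⟩
  · exact fun s _ => hz s
  · exact fun s hs => hout s (Or.inr hs)

private lemma dIleN {μ : ℕ → ℕ → ℕ} {ε : ℕ → ℕ} {M : ℕ} {ζ : ℕ → ℕ → ℕ} {I n : ℕ → ℕ}
    (hd : IsBlockDecomp μ ε M ζ I n) : ∀ m, 1 ≤ m → m ≤ M → I m ≤ n m := by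
  obtain ⟨hM1, hI1, hb1, hbm, hchain, hsum⟩ := hd
  intro m h1 h2
  rcases Nat.lt_or_ge m 2 with h | h
  · have hm : m = 1 := by omega
    subst hm
    rcases hb1 with hb | hb
    · rcases hb with ⟨_, h, _⟩ | ⟨_, h, _⟩
      · omega
      · exact h
    · rw [hI1]; exact hb.1
  · rcases hbm m h h2 with ⟨_, h', _⟩ | ⟨_, h', _⟩
    · omega
    · exact h'

private lemma dnMono {μ : ℕ → ℕ → ℕ} {ε : ℕ → ℕ} {M : ℕ} {ζ : ℕ → ℕ → ℕ} {I n : ℕ → ℕ}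
    (hd : IsBlockDecomp μ ε M ζ I n) : ∀ a b, 1 ≤ a → a ≤ b → b ≤ M → n a ≤ n b := by
  intro a b h1 hab
  induction b, hab using Nat.le_induction with
  | base => intro _; exact le_rfl
  | succ b hab ih =>
    intro hbM
    have h2 := ih (by omega)
    have hchain := hd.2.2.2.2.1 b (by omega) (by omega)
    have h3 : I (b + 1) ≤ n (b + 1) := dIleN hd (b + 1) (by omega) hbM
    omega

private lemma dBlockAbove {μ : ℕ → ℕ → ℕ} {ε : ℕ → ℕ} {M : ℕ} {ζ : ℕ → ℕ → ℕ} {I n : ℕ → ℕ}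
    (hord : ∀ n, 2 ≤ n → μ n (n - 1) ≠ 0 ∧ ∀ k, n - 1 < k → μ n k = 0)
    (hd : IsBlockDecomp μ ε M ζ I n) :
    ∀ m, 1 ≤ m → m ≤ M → ∀ s, n m < s → ζ m s = 0 := by
  intro m h1 h2 s hs
  rcases Nat.lt_or_ge m 2 with h | h
  · have hm : m = 1 := by omega
    subst hm
    rcases hd.2.2.1 with hb | hb
    · exact blockAbove hb s hs
    · rw [hb.2]; exact muAbove hord hb.1 hs
  · exact blockAbove (hd.2.2.2.1 m h h2) s hs

private lemma dAbove {μ : ℕ → ℕ → ℕ} {ε : ℕ → ℕ} {M : ℕ} {ζ : ℕ → ℕ → ℕ} {I n : ℕ → ℕ}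
    (hord : ∀ n, 2 ≤ n → μ n (n - 1) ≠ 0 ∧ ∀ k, n - 1 < k → μ n k = 0)
    (hd : IsBlockDecomp μ ε M ζ I n) : ∀ k, n M < k → ε k = 0 := by
  intro k hk
  rw [hd.2.2.2.2.2 k]
  apply Finset.sum_eq_zero
  intro m hm
  rw [Finset.mem_Icc] at hm
  have h1 : n m ≤ n M := dnMono hd m M hm.1 hm.2 le_rfl
  exact dBlockAbove hord hd m hm.1 hm.2 k (by omega)

private lemma dRestAbove {μ : ℕ → ℕ → ℕ} {ε : ℕ → ℕ} {M : ℕ} {ζ : ℕ → ℕ → ℕ} {I n : ℕ → ℕ}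
    (hord : ∀ n, 2 ≤ n → μ n (n - 1) ≠ 0 ∧ ∀ k, n - 1 < k → μ n k = 0)
    (hd : IsBlockDecomp μ ε M ζ I n) :
    ∀ k, I M ≤ k → ∑ m ∈ Finset.Icc 1 (M - 1), ζ m k = 0 := by
  intro k hk
  apply Finset.sum_eq_zero
  intro m hm
  rw [Finset.mem_Icc] at hm
  have hM2 : 2 ≤ M := by omega
  have h1 : n m ≤ n (M - 1) := dnMono hd m (M - 1) hm.1 hm.2 (by omega)
  have hchain := hd.2.2.2.2.1 (M - 1) (by omega) (by omega)
  rw [show M - 1 + 1 = M from by omega] at hchain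
  exact dBlockAbove hord hd m hm.1 (by omega) k (by omega)

private lemma dTopEq {μ : ℕ → ℕ → ℕ} {ε : ℕ → ℕ} {M : ℕ} {ζ : ℕ → ℕ → ℕ} {I n : ℕ → ℕ}
    (hord : ∀ n, 2 ≤ n → μ n (n - 1) ≠ 0 ∧ ∀ k, n - 1 < k → μ n k = 0)
    (hd : IsBlockDecomp μ ε M ζ I n) : ∀ k, I M ≤ k → ε k = ζ M k := by
  intro k hk
  rw [hd.2.2.2.2.2 k, sum_Icc_split (fun m => ζ m k) M hd.1, dRestAbove hord hd k hk, Nat.zero_add]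

private lemma dLowEq {μ : ℕ → ℕ → ℕ} {ε : ℕ → ℕ} {M : ℕ} {ζ : ℕ → ℕ → ℕ} {I n : ℕ → ℕ}
    (h0 : ∀ n, 2 ≤ n → μ n 0 = 0)
    (hd : IsBlockDecomp μ ε M ζ I n) :
    ∀ k, k < I M → ε k = ∑ m ∈ Finset.Icc 1 (M - 1), ζ m k := by
  intro k hk
  have hM1 := hd.1
  rw [hd.2.2.2.2.2 k, sum_Icc_split (fun m => ζ m k) M hd.1]
  have hz : ζ M k = 0 := by
    rcases Nat.lt_or_ge M 2 with h | h
    · have hM : M = 1 := by omega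
      subst hM
      rcases hd.2.2.1 with hb | hb
      · exact blockBelow hb k hk
      · rw [hd.2.1] at hk
        have hk0 : k = 0 := by omega
        subst hk0
        rw [hb.2]; exact h0 _ (by have := hb.1; omega)
    · exact blockBelow (hd.2.2.2.1 M h le_rfl) k hk
  rw [hz, Nat.add_zero]

private lemma dStrip {μ : ℕ → ℕ → ℕ} {ε : ℕ → ℕ} {M : ℕ} {ζ : ℕ → ℕ → ℕ} {I n : ℕ → ℕ}
    (hd : IsBlockDecomp μ ε M ζ I n) (hM2 : 2 ≤ M) :
    IsBlockDecomp μ (fun k => ∑ m ∈ Finset.Icc 1 (M - 1), ζ m k) (M - 1) ζ I n := by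
  obtain ⟨hM1, hI1, hb1, hbm, hchain, hsum⟩ := hd
  exact ⟨by omega, hI1, hb1, fun m h2 hm => hbm m h2 (by omega),
    fun m h1 hm => hchain m h1 (by omega), fun k => rfl⟩

private lemma zeroMem {μ : ℕ → ℕ → ℕ} : (0 : ℕ → ℕ) ∈ DeterminedCollection μ := by
  refine ⟨1, fun _ _ => 0, fun _ => 1, fun _ => 1, le_rfl, rfl,
    Or.inl (Or.inl ⟨fun _ => rfl, rfl, le_rfl⟩), ?_, ?_, ?_⟩
  · intro m h2 hm; exact absurd (h2.trans hm) (by omega)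
  · intro m h1 hm; exact absurd (h1.trans_lt hm) (by omega)
  · intro k; simp

private lemma memZero {μ : ℕ → ℕ → ℕ} {ε : ℕ → ℕ}
    (h0 : ∀ n, 2 ≤ n → μ n 0 = 0) (hε : ε ∈ DeterminedCollection μ) : ε 0 = 0 := by
  obtain ⟨M, ζ, I, n, hd⟩ := hε
  rw [hd.2.2.2.2.2 0]
  apply Finset.sum_eq_zero
  intro m hm
  rw [Finset.mem_Icc] at hm
  rcases eq_or_lt_of_le hm.1 with h1 | h1
  · subst h1
    rcases hd.2.2.1 with hb | hb
    · exact blockAt0 hb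
    · rw [hb.2]; exact h0 _ (by have := hb.1; omega)
  · exact blockAt0 (hd.2.2.2.1 m h1 hm.2)

private lemma memBdd {μ : ℕ → ℕ → ℕ} {ε : ℕ → ℕ}
    (hord : ∀ n, 2 ≤ n → μ n (n - 1) ≠ 0 ∧ ∀ k, n - 1 < k → μ n k = 0)
    (hε : ε ∈ DeterminedCollection μ) : ∃ N, 1 ≤ N ∧ ∀ k, N < k → ε k = 0 := by
  obtain ⟨M, ζ, I, n, hd⟩ := hε
  refine ⟨n M, ?_, fun k hk => dAbove hord hd k hk⟩
  have h1 : I 1 ≤ n 1 := dIleN hd 1 le_rfl hd.1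
  have h2 : n 1 ≤ n M := dnMono hd 1 M le_rfl hd.1 le_rfl
  have h3 := hd.2.1
  omega
private lemma easyCase {μ : ℕ → ℕ → ℕ} {ε : ℕ → ℕ} {N : ℕ}
    (hord : ∀ n, 2 ≤ n → μ n (n - 1) ≠ 0 ∧ ∀ k, n - 1 < k → μ n k = 0)
    (hN : 1 ≤ N) (hmem : ε ∈ DeterminedCollection μ)
    (hup : ∀ k, N ≤ k → ε k = 0) :
    ∃ i, 1 ≤ i ∧ i ≤ N ∧ ε i < μ (N + 1) i ∧
      (∀ j, i < j → j ≤ N → ε j = μ (N + 1) j) ∧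
      (fun k => if k < i then ε k else 0) ∈ DeterminedCollection μ := by
  refine ⟨N, hN, le_rfl, ?_, fun j hj hj' => absurd (hj.trans_le hj') (lt_irrefl N), ?_⟩
  · rw [hup N le_rfl]
    exact Nat.pos_of_ne_zero (muTop hord hN)
  · have h : (fun k => if k < N then ε k else 0) = ε := by
      funext k
      by_cases h : k < N
      · simp [h]
      · simp only [if_neg h]
        exact (hup k (by omega)).symm
    rw [h]; exact hmem

private lemma SF {μ : ℕ → ℕ → ℕ}
    (h0 : ∀ n, 2 ≤ n → μ n 0 = 0)
    (hord : ∀ n, 2 ≤ n → μ n (n - 1) ≠ 0 ∧ ∀ k, n - 1 < k → μ n k = 0) :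
    ∀ M : ℕ, ∀ ε : ℕ → ℕ, ∀ ζ : ℕ → ℕ → ℕ, ∀ I n : ℕ → ℕ,
      IsBlockDecomp μ ε M ζ I n → ∀ N, 1 ≤ N → (∀ k, N < k → ε k = 0) →
      ε = μ (N + 1) ∨
        ∃ i, 1 ≤ i ∧ i ≤ N ∧ ε i < μ (N + 1) i ∧
          (∀ j, i < j → j ≤ N → ε j = μ (N + 1) j) ∧
          (fun k => if k < i then ε k else 0) ∈ DeterminedCollection μ := by
  intro M
  induction M using Nat.strong_induction_on with
  | _ M IH =>
  intro ε ζ I n hd N hN hb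
  have hmem : ε ∈ DeterminedCollection μ := ⟨M, ζ, I, n, hd⟩
  obtain ⟨hM1, hI1, hb1, hbm, hchain, hsum⟩ := hd
  have hd' : IsBlockDecomp μ ε M ζ I n := ⟨hM1, hI1, hb1, hbm, hchain, hsum⟩
  by_cases hz : ∀ k, ζ M k = 0
  · rcases Nat.lt_or_ge M 2 with hM | hM
    · have hM1' : M = 1 := by omega
      subst hM1'
      have hε0 : ∀ k, ε k = 0 := by
        intro k
        rw [hsum k]
        simpa using hz k
      exact Or.inr (easyCase hord hN hmem (fun k _ => hε0 k))
    · have hstrip : IsBlockDecomp μ ε (M - 1) ζ I n := by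
        refine ⟨by omega, hI1, hb1, fun m h2 hm => hbm m h2 (by omega),
          fun m h1 hm => hchain m h1 (by omega), ?_⟩
        intro k
        have h := sum_Icc_split (fun m => ζ m k) M (by omega)
        rw [hsum k, h]
        beta_reduce
        rw [hz k, Nat.add_zero]
      exact IH (M - 1) (by omega) ε ζ I n hstrip N hN hb
  · push_neg at hz
    obtain ⟨k0, hk0⟩ := hz
    have cont : IsProperBlockAt μ (ζ M) (I M) (n M) →
        (ε = μ (N + 1) ∨
          ∃ i, 1 ≤ i ∧ i ≤ N ∧ ε i < μ (N + 1) i ∧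
            (∀ j, i < j → j ≤ N → ε j = μ (N + 1) j) ∧
            (fun k => if k < i then ε k else 0) ∈ DeterminedCollection μ) := by
      intro htop
      rcases htop with ⟨hzz, _, _⟩ | ⟨hi1, hin, hlt, hagr, hout⟩
      · exact absurd (hzz k0) hk0
      · have htN : n M ≤ N := by
          rcases eq_or_lt_of_le hin with hieq | hilt
          · have hk0i : I M ≤ k0 := by
              by_contra h; push_neg at h; exact hk0 (hout k0 (Or.inl h))
            have hk0t : k0 ≤ n M := by
              by_contra h; push_neg at h; exact hk0 (hout k0 (Or.inr h))
            have hεk0 : ε k0 ≠ 0 := by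
              rw [dTopEq hord hd' k0 hk0i]; exact hk0
            have hk0N : k0 ≤ N := by
              by_contra h; push_neg at h; exact hεk0 (hb k0 h)
            omega
          · have hζt : ζ M (n M) ≠ 0 := by
              rw [hagr (n M) hilt le_rfl]
              exact muTop hord (by omega)
            have hεt : ε (n M) ≠ 0 := by
              rw [dTopEq hord hd' (n M) (by omega)]; exact hζt
            by_contra h; push_neg at h; exact hεt (hb _ h)
        rcases eq_or_lt_of_le htN with heq | hltN
        · right
          refine ⟨I M, hi1, by omega, ?_, ?_, ?_⟩
          · have h := hlt
            rw [heq] at h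
            rw [dTopEq hord hd' (I M) le_rfl]
            exact h
          · intro j hj hj'
            have h := hagr j hj (by omega)
            rw [heq] at h
            rw [dTopEq hord hd' j (by omega)]
            exact h
          · have htr : (fun k => if k < I M then ε k else 0)
                = fun k => ∑ m ∈ Finset.Icc 1 (M - 1), ζ m k := by
              funext k
              by_cases h : k < I M
              · rw [if_pos h]; exact dLowEq h0 hd' k h
              · rw [if_neg h]; exact (dRestAbove hord hd' k (by omega)).symm
            rw [htr]
            rcases Nat.lt_or_ge M 2 with hA | hA
            · have hM1'' : M = 1 := by omega
              have hzf : (fun k => ∑ m ∈ Finset.Icc 1 (M - 1), ζ m k) = (0 : ℕ → ℕ) := by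
                funext k; rw [hM1'']; simp
              rw [hzf]; exact zeroMem
            · exact ⟨M - 1, ζ, I, n, dStrip hd' hA⟩
        · right
          apply easyCase hord hN hmem
          intro k hk
          exact dAbove hord hd' k (by omega)
    rcases Nat.lt_or_ge M 2 with hMlt | hM2
    · have hM1' : M = 1 := by omega
      rcases hb1 with hprop | hmax
      · exact cont (by rw [hM1']; exact hprop)
      · have ht := hmax.1
        have hεeq : ε = μ (n 1 + 1) := by
          funext k
          rw [hsum k, hM1']
          simpa using congrFun hmax.2 k
        have htN : n 1 ≤ N := by
          by_contra h; push_neg at h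
          have h2 := hb (n 1) h
          rw [hεeq] at h2
          exact muTop hord ht h2
        rcases eq_or_lt_of_le htN with heq | hlt
        · left; rw [hεeq, heq]
        · right
          apply easyCase hord hN hmem
          intro k hk
          rw [hεeq]
          exact muAbove hord ht (by omega)
    · exact cont (hbm M hM2 le_rfl)

private lemma dAppend {μ : ℕ → ℕ → ℕ} {τ B ε : ℕ → ℕ} {M t : ℕ}
    {ζ : ℕ → ℕ → ℕ} {I n : ℕ → ℕ}
    (hd : IsBlockDecomp μ τ M ζ I n)
    (hB : IsProperBlockAt μ B (n M + 1) t)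
    (hsum : ∀ k, ε k = τ k + B k) :
    IsBlockDecomp μ ε (M + 1) (fun m => if m ≤ M then ζ m else B)
      (fun m => if m ≤ M then I m else n M + 1) (fun m => if m ≤ M then n m else t) := by
  obtain ⟨hM1, hI1, hb1, hbm, hchain, hτsum⟩ := hd
  refine ⟨by omega, ?_, ?_, ?_, ?_, ?_⟩
  · simp only [if_pos hM1]; exact hI1
  · simp only [if_pos hM1]; exact hb1
  · intro m h2 hm
    by_cases h : m ≤ M
    · simp only [if_pos h]; exact hbm m h2 h
    · have hm' : m = M + 1 := by omega
      subst hm'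
      simp only [if_neg h]
      exact hB
  · intro m h1 hm
    by_cases h : m + 1 ≤ M
    · have h' : m ≤ M := by omega
      simp only [if_pos h, if_pos h']
      exact hchain m h1 (by omega)
    · have hm' : m = M := by omega
      subst hm'
      simp
  · intro k
    rw [hsum k, hτsum k,
      sum_Icc_split (fun m => (if m ≤ M then ζ m else B) k) (M + 1) (by omega)]
    simp only [Nat.add_sub_cancel]
    congr 1
    · apply Finset.sum_congr rfl
      intro m hm
      rw [Finset.mem_Icc] at hm
      rw [if_pos hm.2]
    · rw [if_neg (by omega)]

private lemma dTop {μ : ℕ → ℕ → ℕ}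
    (h0 : ∀ n, 2 ≤ n → μ n 0 = 0)
    (hord : ∀ n, 2 ≤ n → μ n (n - 1) ≠ 0 ∧ ∀ k, n - 1 < k → μ n k = 0) :
    ∀ t, 1 ≤ t → ∀ ε, ε ∈ DeterminedCollection μ → (∀ k, t < k → ε k = 0) →
      ∃ M ζ I n, IsBlockDecomp μ ε M ζ I n ∧ n M = t := by
  intro t
  induction t using Nat.strong_induction_on with
  | _ t IH =>
  intro ht ε hε hb
  obtain ⟨M0, ζ0, I0, n0, hd0⟩ := hε
  have hεmem : ε ∈ DeterminedCollection μ := ⟨M0, ζ0, I0, n0, hd0⟩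
  rcases SF h0 hord M0 ε ζ0 I0 n0 hd0 t ht hb with heq | ⟨i, hi1, hit, hlt, hagr, htr⟩
  · refine ⟨1, fun _ => μ (t + 1), fun _ => 1, fun _ => t, ⟨le_rfl, rfl, Or.inr ⟨ht, rfl⟩,
      ?_, ?_, ?_⟩, rfl⟩
    · intro m h2 hm; exact absurd (h2.trans hm) (by omega)
    · intro m h1 hm; exact absurd (h1.trans_lt hm) (by omega)
    · intro k; rw [heq]; simp
  · by_cases hi : i = 1
    · subst hi
      refine ⟨1, fun _ => ε, fun _ => 1, fun _ => t, ⟨le_rfl, rfl,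
        Or.inl (Or.inr ⟨le_rfl, ht, hlt, hagr, ?_⟩), ?_, ?_, ?_⟩, rfl⟩
      · beta_reduce
        intro s hs
        rcases hs with hs | hs
        · have hs0 : s = 0 := by omega
          subst hs0
          exact memZero h0 hεmem
        · exact hb s hs
      · intro m h2 hm; exact absurd (h2.trans hm) (by omega)
      · intro m h1 hm; exact absurd (h1.trans_lt hm) (by omega)
      · intro k; simp
    · have hi2 : 2 ≤ i := by omega
      obtain ⟨M, ζ, I, n, hd, htop⟩ := IH (i - 1) (by omega) (by omega)
        (fun k => if k < i then ε k else 0) htr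
        (fun k hk => if_neg (by omega))
      have hB : IsProperBlockAt μ (fun k => if i ≤ k ∧ k ≤ t then ε k else 0) (n M + 1) t := by
        rw [htop, show i - 1 + 1 = i from by omega]
        refine Or.inr ⟨hi1, hit, ?_, ?_, ?_⟩
        · beta_reduce
          rw [if_pos ⟨le_rfl, hit⟩]; exact hlt
        · beta_reduce
          intro j hj hj'
          rw [if_pos ⟨by omega, hj'⟩]
          exact hagr j hj hj'
        · beta_reduce
          intro s hs
          rw [if_neg (by omega)]
      have hsum : ∀ k, ε k = (if k < i then ε k else 0) + (if i ≤ k ∧ k ≤ t then ε k else 0) := by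
        intro k
        by_cases h1 : k < i
        · rw [if_pos h1, if_neg (by omega), Nat.add_zero]
        · rw [if_neg h1]
          by_cases h2 : k ≤ t
          · rw [if_pos ⟨by omega, h2⟩, Nat.zero_add]
          · rw [if_neg (by omega), hb k (by omega)]
      refine ⟨M + 1, _, _, _, dAppend hd hB hsum, ?_⟩
      simp

private lemma memStruct {μ : ℕ → ℕ → ℕ}
    (h0 : ∀ n, 2 ≤ n → μ n 0 = 0)
    (hord : ∀ n, 2 ≤ n → μ n (n - 1) ≠ 0 ∧ ∀ k, n - 1 < k → μ n k = 0)
    {N i c : ℕ} {τ : ℕ → ℕ}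
    (hN : 1 ≤ N) (hi1 : 1 ≤ i) (hiN : i ≤ N) (hc : c < μ (N + 1) i)
    (hτ : τ ∈ DeterminedCollection μ) (hτb : ∀ k, i ≤ k → τ k = 0) :
    (fun k => if k < i then τ k else if k = i then c else if k ≤ N then μ (N + 1) k else 0)
      ∈ DeterminedCollection μ := by
  have hsum : ∀ k, (if k < i then τ k else if k = i then c else if k ≤ N then μ (N + 1) k else 0)
      = τ k + (if k < i then 0 else if k = i then c else if k ≤ N then μ (N + 1) k else 0) := by
    intro k
    by_cases h1 : k < i
    · rw [if_pos h1, if_pos h1, Nat.add_zero]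
    · rw [if_neg h1, if_neg h1, hτb k (by omega), Nat.zero_add]
  by_cases hi : i = 1
  · subst hi
    refine ⟨1, fun _ k => if k < 1 then τ k else if k = 1 then c else if k ≤ N then μ (N + 1) k else 0,
      fun _ => 1, fun _ => N, le_rfl, rfl, Or.inl (Or.inr ⟨le_rfl, hN, ?_, ?_, ?_⟩), ?_, ?_, ?_⟩
    · beta_reduce
      rw [if_neg (by omega), if_pos rfl]; exact hc
    · beta_reduce
      intro j hj hj'
      rw [if_neg (by omega), if_neg (by omega), if_pos hj']
    · beta_reduce
      intro s hs
      rcases hs with hs | hs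
      · have hs0 : s = 0 := by omega
        subst hs0
        rw [if_pos (by omega)]
        exact memZero h0 hτ
      · rw [if_neg (by omega), if_neg (by omega), if_neg (by omega)]
    · intro m h2 hm; exact absurd (h2.trans hm) (by omega)
    · intro m h1 hm; exact absurd (h1.trans_lt hm) (by omega)
    · intro k; simp
  · have hi2 : 2 ≤ i := by omega
    obtain ⟨M, ζ, I, n, hd, htop⟩ := dTop h0 hord (i - 1) (by omega) τ hτ
      (fun k hk => hτb k (by omega))
    have hB : IsProperBlockAt μ
        (fun k => if k < i then 0 else if k = i then c else if k ≤ N then μ (N + 1) k else 0)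
        (n M + 1) N := by
      rw [htop, show i - 1 + 1 = i from by omega]
      refine Or.inr ⟨hi1, hiN, ?_, ?_, ?_⟩
      · beta_reduce
        rw [if_neg (by omega), if_pos rfl]; exact hc
      · beta_reduce
        intro j hj hj'
        rw [if_neg (by omega), if_neg (by omega), if_pos hj']
      · beta_reduce
        intro s hs
        rcases hs with hs | hs
        · rw [if_pos hs]
        · rw [if_neg (by omega), if_neg (by omega), if_neg (by omega)]
    exact ⟨M + 1, _, _, _, dAppend hd hB hsum⟩
private lemma singleBlock {μ : ℕ → ℕ → ℕ} {ε : ℕ → ℕ} {t : ℕ}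
    (hblock : IsProperBlockAt μ ε 1 t ∨ IsMaxBlockAt μ ε t) :
    ε ∈ DeterminedCollection μ := by
  refine ⟨1, fun _ => ε, fun _ => 1, fun _ => t, le_rfl, rfl, hblock, ?_, ?_, ?_⟩
  · intro m h2 hm; exact absurd (h2.trans hm) (by omega)
  · intro m h1 hm; exact absurd (h1.trans_lt hm) (by omega)
  · intro k; simp

private lemma valEq {Q ε : ℕ → ℕ} {N : ℕ} (h00 : ε 0 = 0) (hb : ∀ k, N < k → ε k = 0) :
    ∑ᶠ k, ε k * Q k = ∑ k ∈ Finset.Ioc 0 N, ε k * Q k := by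
  apply finsum_eq_finset_sum_of_support_subset
  intro k hk
  simp only [Function.mem_support] at hk
  simp only [Finset.coe_Ioc, Set.mem_Ioc]
  constructor
  · rcases Nat.eq_zero_or_pos k with rfl | h
    · exact absurd (by rw [h00, Nat.zero_mul]) hk
    · exact h
  · by_contra h
    exact hk (by rw [hb k (by omega), Nat.zero_mul])

private lemma valEqTr {Q ε : ℕ → ℕ} {i : ℕ} (h00 : ε 0 = 0) (h1 : 1 ≤ i) :
    (∑ᶠ k, (if k < i then ε k else 0) * Q k) = ∑ k ∈ Finset.Ioc 0 (i - 1), ε k * Q k := by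
  have h := valEq (Q := Q) (ε := fun k => if k < i then ε k else 0) (N := i - 1)
    (by show (if (0 : ℕ) < i then ε 0 else 0) = 0; rw [if_pos (by omega)]; exact h00)
    (fun k hk => by show (if k < i then ε k else 0) = 0; rw [if_neg (by omega)])
  refine h.trans (Finset.sum_congr rfl (fun k hk => ?_))
  rw [Finset.mem_Ioc] at hk
  show (if k < i then ε k else 0) * Q k = ε k * Q k
  rw [if_pos (by omega)]

private lemma Qrec {Q : ℕ → ℕ} {μ : ℕ → ℕ → ℕ} (hQ1 : Q 1 = 1)
    (h0 : ∀ n, 2 ≤ n → μ n 0 = 0)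
    (hord : ∀ n, 2 ≤ n → μ n (n - 1) ≠ 0 ∧ ∀ k, n - 1 < k → μ n k = 0)
    (hrec : ∀ n, 2 ≤ n → Q n = Q 1 + ∑ᶠ k, μ n k * Q k) {t : ℕ} (ht : 1 ≤ t) :
    Q (t + 1) = 1 + ∑ k ∈ Finset.Ioc 0 t, μ (t + 1) k * Q k := by
  have h := hrec (t + 1) (by omega)
  rw [hQ1] at h
  rw [h]
  congr 1
  exact valEq (h0 (t + 1) (by omega)) (fun k hk => muAbove hord ht hk)

private lemma Qpos {Q : ℕ → ℕ} {μ : ℕ → ℕ → ℕ} (hQ1 : Q 1 = 1)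
    (hrec : ∀ n, 2 ≤ n → Q n = Q 1 + ∑ᶠ k, μ n k * Q k) : ∀ n, 1 ≤ n → 1 ≤ Q n := by
  intro n hn
  rcases eq_or_lt_of_le hn with h | h
  · rw [← h, hQ1]
  · rw [hrec n h, hQ1]; omega

private lemma Qge {Q : ℕ → ℕ} {μ : ℕ → ℕ → ℕ} (hQ1 : Q 1 = 1)
    (h0 : ∀ n, 2 ≤ n → μ n 0 = 0)
    (hord : ∀ n, 2 ≤ n → μ n (n - 1) ≠ 0 ∧ ∀ k, n - 1 < k → μ n k = 0)
    (hrec : ∀ n, 2 ≤ n → Q n = Q 1 + ∑ᶠ k, μ n k * Q k) : ∀ n, 1 ≤ n → n ≤ Q n := by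
  intro n hn
  induction n, hn using Nat.le_induction with
  | base => rw [hQ1]
  | succ t ht ih =>
    have hrw := Qrec hQ1 h0 hord hrec ht
    have hmem : t ∈ Finset.Ioc 0 t := Finset.mem_Ioc.mpr ⟨by omega, le_rfl⟩
    have hterm : μ (t + 1) t * Q t ≤ ∑ k ∈ Finset.Ioc 0 t, μ (t + 1) k * Q k :=
      Finset.single_le_sum (f := fun k => μ (t + 1) k * Q k) (fun k _ => Nat.zero_le _) hmem
    have hμ1 : 1 ≤ μ (t + 1) t := Nat.one_le_iff_ne_zero.mpr (muTop hord ht)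
    have h2 : Q t ≤ μ (t + 1) t * Q t := Nat.le_mul_of_pos_left _ (by omega)
    omega

private def Tf (Q : ℕ → ℕ) (μ : ℕ → ℕ → ℕ) (N i : ℕ) : ℕ :=
  ∑ j ∈ Finset.Ioc i N, μ (N + 1) j * Q j

private lemma mainLemma {Q : ℕ → ℕ} {μ : ℕ → ℕ → ℕ} (hQ1 : Q 1 = 1)
    (h0 : ∀ n, 2 ≤ n → μ n 0 = 0)
    (hord : ∀ n, 2 ≤ n → μ n (n - 1) ≠ 0 ∧ ∀ k, n - 1 < k → μ n k = 0)
    (hrec : ∀ n, 2 ≤ n → Q n = Q 1 + ∑ᶠ k, μ n k * Q k) :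
    ∀ N : ℕ,
      (∀ ε, ε ∈ DeterminedCollection μ → (∀ k, N < k → ε k = 0) →
        (∑ᶠ k, ε k * Q k) < Q (N + 1)) ∧
      (∀ ε ε', ε ∈ DeterminedCollection μ → (∀ k, N < k → ε k = 0) →
        ε' ∈ DeterminedCollection μ → (∀ k, N < k → ε' k = 0) →
        (∑ᶠ k, ε k * Q k) = (∑ᶠ k, ε' k * Q k) → ε = ε') ∧
      (∀ m, m < Q (N + 1) →
        ∃ ε, ε ∈ DeterminedCollection μ ∧ (∀ k, N < k → ε k = 0) ∧ (∑ᶠ k, ε k * Q k) = m) := by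
  intro N
  induction N using Nat.strong_induction_on with
  | _ N IH =>
  rcases Nat.eq_zero_or_pos N with rfl | hN
  · have hmem0 : ∀ ε, ε ∈ DeterminedCollection μ → (∀ k, 0 < k → ε k = 0) → ε = 0 := by
      intro ε hε hb
      funext k
      rcases Nat.eq_zero_or_pos k with rfl | hk
      · exact memZero h0 hε
      · exact hb k hk
    have hQ01 : Q (0 + 1) = 1 := hQ1
    refine ⟨?_, ?_, ?_⟩
    · intro ε hε hb
      rw [hmem0 ε hε hb]
      simp [hQ01]
    · intro ε ε' hε hb hε' hb' _
      rw [hmem0 ε hε hb, hmem0 ε' hε' hb']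
    · intro m hm
      rw [hQ01] at hm
      have hm0 : m = 0 := by omega
      subst hm0
      exact ⟨0, zeroMem, fun _ _ => rfl, by simp⟩
  · have hQN : Q (N + 1) = 1 + Tf Q μ N 0 := Qrec hQ1 h0 hord hrec hN
    have hTstep : ∀ i, 1 ≤ i → i ≤ N → Tf Q μ N (i - 1) = μ (N + 1) i * Q i + Tf Q μ N i := by
      intro i h1 h2
      have hsplit := (Finset.sum_Ioc_consecutive (fun j => μ (N + 1) j * Q j)
        (show i - 1 ≤ i by omega) h2).symm
      have hsingle : ∑ j ∈ Finset.Ioc (i - 1) i, μ (N + 1) j * Q j = μ (N + 1) i * Q i := by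
        have he : Finset.Ioc (i - 1) i = {i} := by
          ext x
          simp only [Finset.mem_Ioc, Finset.mem_singleton]
          omega
        rw [he, Finset.sum_singleton]
      show (∑ j ∈ Finset.Ioc (i - 1) N, μ (N + 1) j * Q j) = _
      rw [hsplit, hsingle]
      rfl
    have hTanti : ∀ a b : ℕ, a ≤ b → Tf Q μ N b ≤ Tf Q μ N a := by
      intro a b hab
      apply Finset.sum_le_sum_of_subset
      intro x hx
      simp only [Finset.mem_Ioc] at hx ⊢
      omega
    have hTN : Tf Q μ N N = 0 := by
      show (∑ j ∈ Finset.Ioc N N, μ (N + 1) j * Q j) = 0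
      rw [Finset.Ioc_self, Finset.sum_empty]
    have hQpos : ∀ j, 1 ≤ j → 1 ≤ Q j := Qpos hQ1 hrec
    have hvalμ : (∑ᶠ k, μ (N + 1) k * Q k) = Tf Q μ N 0 :=
      valEq (h0 (N + 1) (by omega)) (fun k hk => muAbove hord hN hk)
    have hμmem : μ (N + 1) ∈ DeterminedCollection μ := singleBlock (Or.inr ⟨hN, rfl⟩)
    have hval : ∀ ε : ℕ → ℕ, ∀ i, 1 ≤ i → i ≤ N → ε 0 = 0 → (∀ k, N < k → ε k = 0) →
        (∀ j, i < j → j ≤ N → ε j = μ (N + 1) j) →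
        (∑ᶠ k, ε k * Q k)
          = (∑ᶠ k, (if k < i then ε k else 0) * Q k) + ε i * Q i + Tf Q μ N i := by
      intro ε i h1 h2 h00 hb hagr
      rw [valEq h00 hb, valEqTr h00 h1]
      have hsplit := Finset.sum_Ioc_consecutive (fun k => ε k * Q k) (Nat.zero_le i) h2
      rw [← hsplit]
      have e2 : ∑ k ∈ Finset.Ioc 0 i, ε k * Q k
          = (∑ k ∈ Finset.Ioc 0 (i - 1), ε k * Q k) + ε i * Q i := by
        conv_lhs => rw [show i = i - 1 + 1 from by omega]
        rw [Finset.sum_Ioc_succ_top (Nat.zero_le _)]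
        rw [show i - 1 + 1 = i from by omega]
      rw [e2]
      have e4 : ∑ k ∈ Finset.Ioc i N, ε k * Q k = Tf Q μ N i := by
        show _ = ∑ j ∈ Finset.Ioc i N, μ (N + 1) j * Q j
        apply Finset.sum_congr rfl
        intro j hj
        rw [Finset.mem_Ioc] at hj
        rw [hagr j hj.1 hj.2]
      rw [e4]
    have hSF2 : ∀ ε, ε ∈ DeterminedCollection μ → (∀ k, N < k → ε k = 0) →
        (ε = μ (N + 1) ∨ ∃ i, 1 ≤ i ∧ i ≤ N ∧ ε i < μ (N + 1) i ∧
          (∀ j, i < j → j ≤ N → ε j = μ (N + 1) j) ∧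
          (fun k => if k < i then ε k else 0) ∈ DeterminedCollection μ) := by
      intro ε hε hb
      obtain ⟨M, ζ, I, n, hd⟩ := hε
      exact SF h0 hord M ε ζ I n hd N hN hb
    have htrval : ∀ ε : ℕ → ℕ, ∀ i, 1 ≤ i → i ≤ N →
        (fun k => if k < i then ε k else 0) ∈ DeterminedCollection μ →
        (∑ᶠ k, (if k < i then ε k else 0) * Q k) < Q i := by
      intro ε i h1 h2 htr
      have h5 := (IH (i - 1) (by omega)).1 (fun k => if k < i then ε k else 0) htr
        (fun k hk => by show (if k < i then ε k else 0) = 0; rw [if_neg (by omega)])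
      rw [show i - 1 + 1 = i from by omega] at h5
      exact h5
    have hstr : ∀ ε : ℕ → ℕ, ∀ i, 1 ≤ i → i ≤ N → ε 0 = 0 → (∀ k, N < k → ε k = 0) →
        ε i < μ (N + 1) i →
        (∀ j, i < j → j ≤ N → ε j = μ (N + 1) j) →
        (fun k => if k < i then ε k else 0) ∈ DeterminedCollection μ →
        Tf Q μ N i ≤ (∑ᶠ k, ε k * Q k) ∧ (∑ᶠ k, ε k * Q k) < Tf Q μ N (i - 1) := by
      intro ε i h1 h2 h00 hb hlt hagr htr
      have hv := hval ε i h1 h2 h00 hb hagr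
      have hA := htrval ε i h1 h2 htr
      constructor
      · rw [hv]; omega
      · rw [hv, hTstep i h1 h2]
        have h4 : (ε i + 1) * Q i ≤ μ (N + 1) i * Q i :=
          mul_le_mul_left (by omega) (Q i)
        have h5 : (ε i + 1) * Q i = ε i * Q i + Q i := by ring
        omega
    refine ⟨?_, ?_, ?_⟩
    · intro ε hε hb
      rcases hSF2 ε hε hb with heq | ⟨i, h1, h2, hlt, hagr, htr⟩
      · rw [heq, hvalμ, hQN]; omega
      · have h00 : ε 0 = 0 := memZero h0 hε
        have hs := (hstr ε i h1 h2 h00 hb hlt hagr htr).2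
        have h3 : Tf Q μ N (i - 1) ≤ Tf Q μ N 0 := hTanti 0 (i - 1) (Nat.zero_le _)
        rw [hQN]; omega
    · intro ε ε' hε hb hε' hb' hvv
      rcases hSF2 ε hε hb with heq | ⟨i, h1, h2, hlt, hagr, htr⟩ <;>
        rcases hSF2 ε' hε' hb' with heq' | ⟨i', h1', h2', hlt', hagr', htr'⟩
      · rw [heq, heq']
      · exfalso
        have h00' : ε' 0 = 0 := memZero h0 hε'
        have hs' := (hstr ε' i' h1' h2' h00' hb' hlt' hagr' htr').2
        have h3 : Tf Q μ N (i' - 1) ≤ Tf Q μ N 0 := hTanti 0 (i' - 1) (Nat.zero_le _)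
        rw [heq, hvalμ] at hvv
        omega
      · exfalso
        have h00 : ε 0 = 0 := memZero h0 hε
        have hs := (hstr ε i h1 h2 h00 hb hlt hagr htr).2
        have h3 : Tf Q μ N (i - 1) ≤ Tf Q μ N 0 := hTanti 0 (i - 1) (Nat.zero_le _)
        rw [heq', hvalμ] at hvv
        omega
      · have h00 : ε 0 = 0 := memZero h0 hε
        have h00' : ε' 0 = 0 := memZero h0 hε'
        have hs := hstr ε i h1 h2 h00 hb hlt hagr htr
        have hs' := hstr ε' i' h1' h2' h00' hb' hlt' hagr' htr'
        have hii : i = i' := by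
          by_contra hne
          rcases Nat.lt_or_ge i i' with h | h
          · have hle : Tf Q μ N (i' - 1) ≤ Tf Q μ N i := hTanti i (i' - 1) (by omega)
            omega
          · have hlt2 : i' < i := by omega
            have hle : Tf Q μ N (i - 1) ≤ Tf Q μ N i' := hTanti i' (i - 1) (by omega)
            omega
        subst hii
        have hv1 := hval ε i h1 h2 h00 hb hagr
        have hv2 := hval ε' i h1 h2' h00' hb' hagr'
        have hA := htrval ε i h1 h2 htr
        have hA' := htrval ε' i h1 h2 htr'
        have hq : 0 < Q i := hQpos i h1
        rw [hv1, hv2] at hvv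
        have E : (∑ᶠ k, (if k < i then ε k else 0) * Q k) + ε i * Q i
            = (∑ᶠ k, (if k < i then ε' k else 0) * Q k) + ε' i * Q i := by omega
        have hdd : ε i = ε' i := by
          have h5 := congrArg (fun x => x / Q i) E
          simpa only [Nat.add_mul_div_right _ _ hq, Nat.div_eq_of_lt hA,
            Nat.div_eq_of_lt hA', Nat.zero_add] using h5
        have hAA : (∑ᶠ k, (if k < i then ε k else 0) * Q k)
            = (∑ᶠ k, (if k < i then ε' k else 0) * Q k) := by
          have h5 := congrArg (fun x => x % Q i) E
          simpa only [Nat.add_mul_mod_self_right, Nat.mod_eq_of_lt hA,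
            Nat.mod_eq_of_lt hA'] using h5
        have hττ := (IH (i - 1) (by omega)).2.1 _ _ htr
          (fun k hk => by show (if k < i then ε k else 0) = 0; rw [if_neg (by omega)]) htr'
          (fun k hk => by show (if k < i then ε' k else 0) = 0; rw [if_neg (by omega)]) hAA
        funext k
        rcases lt_trichotomy k i with h | h | h
        · have h6 := congrFun hττ k
          simpa [h] using h6
        · subst h
          exact hdd
        · rcases Nat.lt_or_ge N k with hk | hk
          · rw [hb k hk, hb' k hk]
          · rw [hagr k h hk, hagr' k h hk]
    · intro m hm
      by_cases hm0 : m = Tf Q μ N 0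
      · exact ⟨μ (N + 1), hμmem, fun k hk => muAbove hord hN hk, by rw [hvalμ, hm0]⟩
      · have hmT : m < Tf Q μ N 0 := by rw [hQN] at hm; omega
        have hex : ∃ i, Tf Q μ N i ≤ m := ⟨N, by rw [hTN]; exact Nat.zero_le m⟩
        have hfind : Tf Q μ N (Nat.find hex) ≤ m := Nat.find_spec hex
        set i := Nat.find hex with hidef
        have hmin : ∀ j, j < i → ¬ Tf Q μ N j ≤ m := fun j hj => Nat.find_min hex hj
        have hi1 : 1 ≤ i := by
          by_contra h
          push_neg at h
          have hi0 : i = 0 := by omega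
          rw [hi0] at hfind
          omega
        have hiN : i ≤ N := by
          by_contra h
          push_neg at h
          exact hmin N h (by rw [hTN]; exact Nat.zero_le m)
        have hmlt : m < Tf Q μ N (i - 1) := by
          by_contra h
          push_neg at h
          exact hmin (i - 1) (by omega) h
        have hstep := hTstep i hi1 hiN
        have hq : 0 < Q i := hQpos i hi1
        set r := m - Tf Q μ N i with hrdef
        set c := r / Q i with hcdef
        set m1 := r % Q i with hm1def
        have hr : r < μ (N + 1) i * Q i := by omega
        have hc : c < μ (N + 1) i := (Nat.div_lt_iff_lt_mul hq).mpr hr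
        have hm1 : m1 < Q i := Nat.mod_lt _ hq
        obtain ⟨τ, hτmem, hτb, hτval⟩ := (IH (i - 1) (by omega)).2.2 m1
          (by rw [show i - 1 + 1 = i from by omega]; exact hm1)
        set ε2 : ℕ → ℕ := fun k => if k < i then τ k else if k = i then c
          else if k ≤ N then μ (N + 1) k else 0 with hε2
        have hmem2 : ε2 ∈ DeterminedCollection μ :=
          memStruct h0 hord hN hi1 hiN hc hτmem (fun k hk => hτb k (by omega))
        have hb2 : ∀ k, N < k → ε2 k = 0 := by
          intro k hk
          rw [hε2]
          beta_reduce
          rw [if_neg (by omega), if_neg (by omega), if_neg (by omega)]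
        have h002 : ε2 0 = 0 := by
          rw [hε2]
          beta_reduce
          rw [if_pos (by omega)]
          exact memZero h0 hτmem
        have hagr2 : ∀ j, i < j → j ≤ N → ε2 j = μ (N + 1) j := by
          intro j hj hj'
          rw [hε2]
          beta_reduce
          rw [if_neg (by omega), if_neg (by omega), if_pos hj']
        refine ⟨ε2, hmem2, hb2, ?_⟩
        rw [hval ε2 i hi1 hiN h002 hb2 hagr2]
        have htreq : (fun k => if k < i then ε2 k else 0) = τ := by
          funext k
          by_cases h : k < i
          · rw [if_pos h, hε2]
            beta_reduce
            rw [if_pos h]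
          · rw [if_neg h]
            exact (hτb k (by omega)).symm
        have hveq : (∑ᶠ k, (if k < i then ε2 k else 0) * Q k) = ∑ᶠ k, τ k * Q k :=
          congrArg (fun f : ℕ → ℕ => ∑ᶠ k, f k * Q k) htreq
        rw [hveq, hτval]
        have hε2i : ε2 i = c := by
          rw [hε2]
          beta_reduce
          rw [if_neg (by omega), if_pos rfl]
        rw [hε2i]
        have hdm := Nat.div_add_mod r (Q i)
        rw [← hcdef, ← hm1def] at hdm
        have hcomm : c * Q i = Q i * c := Nat.mul_comm _ _
        omega
/-- Zeckendorf's theorem for positive integers: if `Q 1 = 1` and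
`Q n = Q 1 + Σ_k (μ n) k * Q k` where `μ n` has order `n - 1` (for `n ≥ 2`),
then `ε ↦ Σ_k ε k * Q k` is injective on the collection `𝓔` determined by the
family `μ` and maps `𝓔 \ {0}` bijectively onto the positive integers; i.e.
`Q` is a fundamental sequence for `ℕ` under the `𝓔`-Zeckendorf condition. -/
theorem fundamental_sequence_for_positive_integers (Q : ℕ → ℕ) (hQ1 : Q 1 = 1)
    (μ : ℕ → ℕ → ℕ) (h0 : ∀ n, 2 ≤ n → μ n 0 = 0)
    (hord : ∀ n, 2 ≤ n → μ n (n - 1) ≠ 0 ∧ ∀ k, n - 1 < k → μ n k = 0)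
    (hrec : ∀ n, 2 ≤ n → Q n = Q 1 + ∑ᶠ k, μ n k * Q k) :
    Set.InjOn (fun ε : ℕ → ℕ => ∑ᶠ k, ε k * Q k) (DeterminedCollection μ) ∧
    Set.BijOn (fun ε : ℕ → ℕ => ∑ᶠ k, ε k * Q k)
      (DeterminedCollection μ \ {0}) {m : ℕ | 0 < m} := by
  have hQp : ∀ n, 1 ≤ n → 1 ≤ Q n := Qpos hQ1 hrec
  have ML := mainLemma hQ1 h0 hord hrec
  have hinj : Set.InjOn (fun ε : ℕ → ℕ => ∑ᶠ k, ε k * Q k) (DeterminedCollection μ) := by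
    intro ε hε ε' hε' hv
    obtain ⟨N1, _, hb1⟩ := memBdd hord hε
    obtain ⟨N2, _, hb2⟩ := memBdd hord hε'
    refine (ML (max N1 N2)).2.1 ε ε' hε ?_ hε' ?_ hv
    · intro k hk
      exact hb1 k (lt_of_le_of_lt (le_max_left N1 N2) hk)
    · intro k hk
      exact hb2 k (lt_of_le_of_lt (le_max_right N1 N2) hk)
  have hpos : ∀ ε, ε ∈ DeterminedCollection μ → ε ≠ 0 → 0 < ∑ᶠ k, ε k * Q k := by
    intro ε hε hne
    obtain ⟨N, hN1, hb⟩ := memBdd hord hε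
    have h00 : ε 0 = 0 := memZero h0 hε
    rw [valEq h00 hb]
    have hex : ∃ k, ε k ≠ 0 := by
      by_contra h
      push_neg at h
      exact hne (funext fun k => h k)
    obtain ⟨k0, hk0⟩ := hex
    have hk01 : 1 ≤ k0 := by
      rcases Nat.eq_zero_or_pos k0 with rfl | h
      · exact absurd h00 hk0
      · exact h
    have hk0N : k0 ≤ N := by
      by_contra h
      push_neg at h
      exact hk0 (hb k0 h)
    have hle : ε k0 * Q k0 ≤ ∑ k ∈ Finset.Ioc 0 N, ε k * Q k :=
      Finset.single_le_sum (f := fun k => ε k * Q k) (fun k _ => Nat.zero_le _)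
        (Finset.mem_Ioc.mpr ⟨by omega, hk0N⟩)
    have h1 : 1 ≤ ε k0 := Nat.one_le_iff_ne_zero.mpr hk0
    have h2 : 1 ≤ Q k0 := hQp k0 hk01
    have h3 : 1 ≤ ε k0 * Q k0 :=
      Nat.one_le_iff_ne_zero.mpr (Nat.mul_ne_zero (by omega) (by omega))
    omega
  refine ⟨hinj, ?_, ?_, ?_⟩
  · intro ε hε
    exact hpos ε hε.1 hε.2
  · exact hinj.mono Set.diff_subset
  · intro m hm
    have hm' : 0 < m := hm
    have hmlt : m < Q (m + 1) := by
      have := Qge hQ1 h0 hord hrec (m + 1) (by omega)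
      omega
    obtain ⟨ε, hε, hb, hv⟩ := (ML m).2.2 m hmlt
    refine ⟨ε, ⟨hε, ?_⟩, hv⟩
    intro hz
    have hz' : ε = 0 := hz
    rw [hz'] at hv
    simp at hv
    omega
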